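/- A delta-matroid D = (E, F) has constant twist polynomial (i.e., ∂w_D(z) = k for some integer k) if and only if |F| = 1. -/

import Mathlib

open Finset

variable {α : Type*}

/-- The twist of a family of feasible sets by a set `A`:
`{A Δ X : X ∈ F}`. -/
def twistF [DecidableEq α] (A : Finset α) (F : Finset (Finset α)) : Finset (Finset α) :=
  F.image (fun X => symmDiff A X)

/-- `D = (E, F)` is a delta-matroid: `F` is nonempty, consists of subsets of `E`,
and satisfies the symmetric exchange axiom. -/
def IsDeltaMatroid [DecidableEq α] (E : Finset α) (F : Finset (Finset α)) : Prop :=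
  F.Nonempty ∧ (∀ X ∈ F, X ⊆ E) ∧
    ∀ X ∈ F, ∀ Y ∈ F, ∀ u ∈ symmDiff X Y,
      ∃ v ∈ symmDiff X Y, symmDiff X {u, v} ∈ F

/-- The width of a set system: max feasible size minus min feasible size. -/
def widthF (F : Finset (Finset α)) : ℕ :=
  (F.image Finset.card).max.getD 0 - (F.image Finset.card).min.getD 0

/-- The twist polynomial `∑_{A ⊆ E} z^{w(D*A)}`, as a polynomial over ℤ. -/
noncomputable def twistPoly [DecidableEq α] (E : Finset α) (F : Finset (Finset α)) :
    Polynomial ℤ :=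
  ∑ A ∈ E.powerset, Polynomial.X ^ widthF (twistF A F)

lemma widthF_zero_card_eq {F : Finset (Finset α)} (h : widthF F = 0) {X Y : Finset α}
    (hX : X ∈ F) (hY : Y ∈ F) : X.card = Y.card := by
  have hne : (F.image Finset.card).Nonempty := ⟨X.card, mem_image_of_mem _ hX⟩
  have hmax : (F.image Finset.card).max = ((F.image Finset.card).max' hne : ℕ) :=
    (Finset.coe_max' hne).symm
  have hmin : (F.image Finset.card).min = ((F.image Finset.card).min' hne : ℕ) :=
    (Finset.coe_min' hne).symm
  have hw : (F.image Finset.card).max' hne - (F.image Finset.card).min' hne = 0 := by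
    simp only [widthF, hmax, hmin] at h; exact h
  have hle : (F.image Finset.card).max' hne ≤ (F.image Finset.card).min' hne :=
    Nat.le_of_sub_eq_zero hw
  have hX1 := Finset.le_max' _ _ (mem_image_of_mem Finset.card hX)
  have hX2 := Finset.min'_le _ _ (mem_image_of_mem Finset.card hX)
  have hY1 := Finset.le_max' _ _ (mem_image_of_mem Finset.card hY)
  have hY2 := Finset.min'_le _ _ (mem_image_of_mem Finset.card hY)
  omega

lemma symmDiff_singleton_mem [DecidableEq α] {u : α} {X : Finset α} (hu : u ∈ X) :
    symmDiff {u} X = X.erase u := by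
  ext a
  simp only [Finset.mem_symmDiff, Finset.mem_singleton, Finset.mem_erase]
  constructor
  · rintro (⟨rfl, h⟩ | ⟨h1, h2⟩)
    · exact absurd hu h
    · exact ⟨h2, h1⟩
  · rintro ⟨h1, h2⟩; exact Or.inr ⟨h2, h1⟩

lemma symmDiff_singleton_not_mem [DecidableEq α] {u : α} {X : Finset α} (hu : u ∉ X) :
    symmDiff {u} X = insert u X := by
  ext a
  simp only [Finset.mem_symmDiff, Finset.mem_singleton, Finset.mem_insert]
  constructor
  · rintro (⟨rfl, _⟩ | ⟨h1, h2⟩)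
    · exact Or.inl rfl
    · exact Or.inr h1
  · rintro (rfl | h)
    · exact Or.inl ⟨rfl, hu⟩
    · exact Or.inr ⟨h, fun h' => hu (h' ▸ h)⟩

/-- The twist polynomial of a delta-matroid is constant (i.e. every twist has width 0)
iff there is exactly one feasible set. -/
theorem twistPoly_constant_iff [DecidableEq α] (E : Finset α) (F : Finset (Finset α))
    (hD : IsDeltaMatroid E F) :
    (∀ A ∈ E.powerset, widthF (twistF A F) = 0) ↔ F.card = 1 := by
  obtain ⟨hne, hsub, -⟩ := hD
  constructor
  · intro h
    by_contra hcard
    -- there exist two distinct feasible sets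
    obtain ⟨X, hX⟩ := hne
    have : ∃ Y ∈ F, Y ≠ X := by
      by_contra hall
      push_neg at hall
      exact hcard (Finset.card_eq_one.mpr ⟨X, Finset.eq_singleton_iff_unique_mem.mpr
        ⟨hX, fun y hy => hall y hy⟩⟩)
    obtain ⟨Y, hY, hYX⟩ := this
    -- widths: with A = ∅, all feasible sets have equal card
    have h0 : widthF (twistF ∅ F) = 0 := h ∅ (Finset.empty_mem_powerset E)
    have htw0 : twistF ∅ F = F := by
      have hs : ∀ X : Finset α, symmDiff (∅ : Finset α) X = X := fun X => by
        simp [symmDiff_def]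
      simp [twistF, hs]
    rw [htw0] at h0
    have hcardeq : X.card = Y.card := widthF_zero_card_eq h0 hX hY
    -- pick u in the symmetric difference
    have hXY : symmDiff X Y ≠ ∅ := by
      intro hem
      exact hYX (symmDiff_eq_bot.mp hem).symm
    obtain ⟨u, hu⟩ := Finset.nonempty_iff_ne_empty.mpr hXY
    rw [Finset.mem_symmDiff] at hu
    -- helper to derive contradiction given u ∈ X \ Y
    have key : ∀ X Y : Finset α, X ∈ F → Y ∈ F → X.card = Y.card →
        ∀ u, u ∈ X → u ∉ Y → False := by
      intro X Y hX hY hceq u huX huY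
      have huE : ({u} : Finset α) ⊆ E := by
        simpa using hsub X hX huX
      have hw := h {u} (Finset.mem_powerset.mpr huE)
      have h1 : symmDiff {u} X ∈ twistF {u} F := mem_image_of_mem _ hX
      have h2 : symmDiff {u} Y ∈ twistF {u} F := mem_image_of_mem _ hY
      have hce := widthF_zero_card_eq hw h1 h2
      rw [symmDiff_singleton_mem huX, symmDiff_singleton_not_mem huY,
        Finset.card_erase_of_mem huX, Finset.card_insert_of_notMem huY] at hce
      have : 1 ≤ X.card := Finset.card_pos.mpr ⟨u, huX⟩
      omega
    rcases hu with ⟨h1, h2⟩ | ⟨h1, h2⟩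
    · exact key X Y hX hY hcardeq u h1 h2
    · exact key Y X hY hX hcardeq.symm u h1 h2
  · intro h A _
    obtain ⟨X, hXF⟩ := Finset.card_eq_one.mp h
    subst hXF
    simp only [twistF, widthF, Finset.image_singleton]
    exact Nat.sub_self _
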